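/- For every n ≥ 1, r_4(ℤ_4^n) equals the maximal possible value of ∑_{x ∈ 𝔽_2^n} |A(x)| over all systems of finite subsets A(x) ⊆ 𝔽_2^n (one subset for each x ∈ 𝔽_2^n) satisfying property (**). -/
import Mathlib


/-- `S ⊆ (ℤ/mℤ)^n` contains no proper `k`-term arithmetic progression. -/
def ProgFree (m k : ℕ) {n : ℕ} (S : Finset (Fin n → ZMod m)) : Prop :=
  ¬ ∃ x d : Fin n → ZMod m,
      (Function.Injective fun i : Fin k => x + (i : ℕ) • d) ∧
      ∀ i : Fin k, x + (i : ℕ) • d ∈ S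

/-- Maximal size of a subset of `(ℤ/mℤ)^n` without a proper `k`-term AP. -/
noncomputable def rAP (k m n : ℕ) : ℕ :=
  sSup {c : ℕ | ∃ S : Finset (Fin n → ZMod m), ProgFree m k S ∧ S.card = c}

/-- Property `(**)`: if `x + y ∈ (A(x) + A(x)) ∩ (A(y) + A(y))`, then `x = y`. -/
def PropertyStarStar {n : ℕ}
    (A : (Fin n → ZMod 2) → Finset (Fin n → ZMod 2)) : Prop :=
  ∀ x y : Fin n → ZMod 2,
    ((∃ a ∈ A x, ∃ a' ∈ A x, x + y = a + a') ∧
      (∃ b ∈ A y, ∃ b' ∈ A y, x + y = b + b')) → x = y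

namespace S17
def pr : ZMod 4 → ZMod 2 := fun z => z.val
def sg : ZMod 4 → ZMod 2 := fun z => if z.val ≤ 1 then 0 else 1
def em : ZMod 2 → ZMod 2 → ZMod 4 := fun u s => (u.val : ZMod 4) + 2 * (s.val : ZMod 4)

lemma pr_em : ∀ u s, pr (em u s) = u := by decide
lemma sg_em : ∀ u s, sg (em u s) = s := by decide
lemma em_pr_sg : ∀ z, em (pr z) (sg z) = z := by decide
lemma L2 : ∀ u v s t, em u s + (2:ℕ) • (em v t - em u s) = em u (s + (u + v)) := by decide
lemma L3 : ∀ u v s t, em u s + (3:ℕ) • (em v t - em u s) = em v (t + (u + v)) := by decide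
lemma pr_add : ∀ z w, pr (z + w) = pr z + pr w := by decide
lemma pr_add2 : ∀ z w : ZMod 4, pr (z + (2:ℕ) • w) = pr z := by decide
lemma pr_add3 : ∀ z w : ZMod 4, pr (z + (3:ℕ) • w) = pr z + pr w := by decide
lemma sg_add2 : ∀ z w : ZMod 4, sg (z + (2:ℕ) • w) = sg z + pr w := by decide
lemma sg_add3 : ∀ z w : ZMod 4, sg (z + (3:ℕ) • w) = sg (z + w) + pr w := by decide
lemma smul2_zero : ∀ z : ZMod 4, pr z = 0 → (2:ℕ) • z = 0 := by decide
lemma z2_addself : ∀ u : ZMod 2, u + u = 0 := by decide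
lemma z2_cancel : ∀ u v : ZMod 2, u + (u + v) = v := by decide

variable {n : ℕ}

def Phi (x a : Fin n → ZMod 2) : Fin n → ZMod 4 := fun i => em (x i) (a i)

lemma pr_Phi (x a : Fin n → ZMod 2) : (fun i => pr (Phi x a i)) = x :=
  funext fun i => pr_em _ _
lemma sg_Phi (x a : Fin n → ZMod 2) : (fun i => sg (Phi x a i)) = a :=
  funext fun i => sg_em _ _
lemma Phi_pr_sg (z : Fin n → ZMod 4) :
    Phi (fun i => pr (z i)) (fun i => sg (z i)) = z := funext fun i => em_pr_sg _
lemma Phi_inj {x a y b : Fin n → ZMod 2} (h : Phi x a = Phi y b) : x = y ∧ a = b := by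
  refine ⟨?_, ?_⟩
  · rw [← pr_Phi x a, ← pr_Phi y b, h]
  · rw [← sg_Phi x a, ← sg_Phi y b, h]

lemma inj4 {α : Type*} {f : Fin 4 → α}
    (h01 : f 0 ≠ f 1) (h02 : f 0 ≠ f 2) (h03 : f 0 ≠ f 3)
    (h12 : f 1 ≠ f 2) (h13 : f 1 ≠ f 3) (h23 : f 2 ≠ f 3) :
    Function.Injective f := by
  intro i j hij
  fin_cases i <;> fin_cases j <;> simp_all

lemma addself_fun (v : Fin n → ZMod 2) : v + v = 0 := by
  funext i; exact z2_addself (v i)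
lemma eq_of_add_eq_zero {x y : Fin n → ZMod 2} (h : x + y = 0) : x = y := by
  have := congrArg (· + y) h
  simpa [add_assoc, addself_fun] using this

-- Direction 1: from an AP-free S, the fiber system satisfies (**)
lemma dir1 {S : Finset (Fin n → ZMod 4)} (hS : ProgFree 4 4 S) :
    PropertyStarStar (fun x => Finset.univ.filter (fun a => Phi x a ∈ S)) := by
  rintro x y ⟨⟨a, ha, a', ha', hxy⟩, ⟨b, hb, b', hb', hxy'⟩⟩
  simp only [Finset.mem_filter, Finset.mem_univ, true_and] at ha ha' hb hb'
  by_contra hne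
  apply hS
  set p := Phi x a with hp
  set d := Phi y b - Phi x a with hd
  have hxyne : x ≠ y := hne
  have haa' : a ≠ a' := by
    intro h
    exact hxyne (eq_of_add_eq_zero (by rw [hxy, h, addself_fun]))
  have hbb' : b ≠ b' := by
    intro h
    exact hxyne (eq_of_add_eq_zero (by rw [hxy', h, addself_fun]))
  have e0 : p + (0:ℕ) • d = Phi x a := by simp [hp]
  have e1 : p + (1:ℕ) • d = Phi y b := by simp [hp, hd]
  have e2 : p + (2:ℕ) • d = Phi x a' := by
    funext i
    have : a i + (x i + y i) = a' i := by
      have := congrFun hxy i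
      simp only [Pi.add_apply] at this
      rw [this, z2_cancel]
    simpa [hp, hd, Phi, Pi.sub_apply, Pi.smul_apply, this] using L2 (x i) (y i) (a i) (b i)
  have e3 : p + (3:ℕ) • d = Phi y b' := by
    funext i
    have : b i + (x i + y i) = b' i := by
      have := congrFun hxy' i
      simp only [Pi.add_apply] at this
      rw [this, z2_cancel]
    simpa [hp, hd, Phi, Pi.sub_apply, Pi.smul_apply, this] using L3 (x i) (y i) (a i) (b i)
  refine ⟨p, d, ?_, ?_⟩
  · apply inj4 (f := fun i : Fin 4 => p + (i : ℕ) • d) <;>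
      simp only [Fin.isValue, Fin.val_zero, Fin.val_one, Fin.val_two,
        show ((3 : Fin 4) : ℕ) = 3 from rfl, show ((2 : Fin 4) : ℕ) = 2 from rfl,
        e0, e1, e2, e3]
    all_goals
      intro h
      first
      | exact hxyne (Phi_inj h).1
      | exact hxyne (Phi_inj h).1.symm
      | exact haa' (Phi_inj h).2
      | exact haa' (Phi_inj h).2.symm
      | exact hbb' (Phi_inj h).2
      | exact hbb' (Phi_inj h).2.symm
  · intro i
    fin_cases i <;>
      simp only [Fin.isValue, Fin.val_zero, Fin.val_one,
        show ((3 : Fin 4) : ℕ) = 3 from rfl, show ((2 : Fin 4) : ℕ) = 2 from rfl,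
        e0, e1, e2, e3]
    · exact ha
    · exact hb
    · exact ha'
    · exact hb'


lemma z2_eq_add (u v : ZMod 2) (h : u = u + v) : v = 0 := by revert u v h; decide

def SA (A : (Fin n → ZMod 2) → Finset (Fin n → ZMod 2)) : Finset (Fin n → ZMod 4) :=
  (Finset.univ.sigma fun x => A x).image fun p => Phi p.1 p.2

lemma mem_SA {A : (Fin n → ZMod 2) → Finset (Fin n → ZMod 2)} {z : Fin n → ZMod 4} :
    z ∈ SA A ↔ (fun i => sg (z i)) ∈ A (fun i => pr (z i)) := by
  simp only [SA, Finset.mem_image, Finset.mem_sigma, Finset.mem_univ, true_and]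
  constructor
  · rintro ⟨⟨x, a⟩, ha, rfl⟩
    simpa only [pr_Phi, sg_Phi] using ha
  · intro h
    exact ⟨⟨_, _⟩, h, Phi_pr_sg z⟩

lemma dir2 {A : (Fin n → ZMod 2) → Finset (Fin n → ZMod 2)} (hA : PropertyStarStar A) :
    ProgFree 4 4 (SA A) := by
  rintro ⟨x, d, hinj, hmem⟩
  set X := fun i => pr (x i) with hX
  set D := fun i => pr (d i) with hD
  set Y := fun i => pr (x i) + pr (d i) with hY
  have h0 : x + ((0 : Fin 4) : ℕ) • d = x := by simp
  have h2 : x + ((2 : Fin 4) : ℕ) • d = x + (2:ℕ) • d := rfl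
  have h3 : x + ((3 : Fin 4) : ℕ) • d = x + (3:ℕ) • d := rfl
  have h1 : x + ((1 : Fin 4) : ℕ) • d = x + d := by simp
  have m0 := mem_SA.1 (h0 ▸ hmem 0)
  have m1 := mem_SA.1 (h1 ▸ hmem 1)
  have m2 := mem_SA.1 (h2 ▸ hmem 2)
  have m3 := mem_SA.1 (h3 ▸ hmem 3)
  have pr2 : (fun i => pr ((x + (2:ℕ) • d) i)) = X := by
    funext i
    simp only [Pi.add_apply, Pi.smul_apply]
    exact pr_add2 _ _
  have sg2 : (fun i => sg ((x + (2:ℕ) • d) i)) = fun i => sg (x i) + pr (d i) := by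
    funext i
    simp only [Pi.add_apply, Pi.smul_apply]
    exact sg_add2 _ _
  have pr1 : (fun i => pr ((x + d) i)) = Y := by
    funext i
    simp only [Pi.add_apply]
    exact pr_add _ _
  have pr3 : (fun i => pr ((x + (3:ℕ) • d) i)) = Y := by
    funext i
    simp only [Pi.add_apply, Pi.smul_apply]
    exact pr_add3 _ _
  have sg3 : (fun i => sg ((x + (3:ℕ) • d) i)) = fun i => sg ((x + d) i) + pr (d i) := by
    funext i
    simp only [Pi.add_apply, Pi.smul_apply]
    exact sg_add3 _ _
  rw [pr2, sg2] at m2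
  rw [pr1] at m1
  rw [pr3, sg3] at m3
  have hXY : X = Y := by
    apply hA X Y
    constructor
    · refine ⟨_, m0, _, m2, ?_⟩
      funext i
      simp only [Pi.add_apply]
      rw [z2_cancel, z2_cancel]
    · refine ⟨_, m1, _, m3, ?_⟩
      funext i
      simp only [Pi.add_apply]
      rw [z2_cancel, z2_cancel]
  have hD0 : ∀ i, pr (d i) = 0 := by
    intro i
    exact z2_eq_add _ _ (congrFun hXY i)
  have h2d : (2:ℕ) • d = 0 := by
    funext i
    exact smul2_zero _ (hD0 i)
  have : (0 : Fin 4) = 2 := by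
    apply hinj
    show x + ((0 : Fin 4) : ℕ) • d = x + ((2 : Fin 4) : ℕ) • d
    rw [h0, h2, h2d, add_zero]
  exact absurd this (by decide)

lemma cardSA (A : (Fin n → ZMod 2) → Finset (Fin n → ZMod 2)) :
    (SA A).card = ∑ x : Fin n → ZMod 2, (A x).card := by
  rw [SA, Finset.card_image_of_injective, Finset.card_sigma]
  rintro ⟨x, a⟩ ⟨y, b⟩ h
  obtain ⟨h1, h2⟩ := Phi_inj h
  subst h1; subst h2; rfl

lemma SA_fiber (S : Finset (Fin n → ZMod 4)) :
    SA (fun x => Finset.univ.filter (fun a => Phi x a ∈ S)) = S := by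
  ext z
  rw [mem_SA]
  simp only [Finset.mem_filter, Finset.mem_univ, true_and]
  rw [Phi_pr_sg]

lemma cardFib (S : Finset (Fin n → ZMod 4)) :
    ∑ x : Fin n → ZMod 2,
      (Finset.univ.filter (fun a => Phi x a ∈ S)).card = S.card := by
  conv_rhs => rw [← SA_fiber S]
  exact (cardSA _).symm

end S17

open S17

theorem stmt17 (n : ℕ) (hn : 1 ≤ n) :
    rAP 4 4 n =
      sSup {c : ℕ | ∃ A : (Fin n → ZMod 2) → Finset (Fin n → ZMod 2),
        PropertyStarStar A ∧ ∑ x : Fin n → ZMod 2, (A x).card = c} := by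
  have hset : {c : ℕ | ∃ S : Finset (Fin n → ZMod 4), ProgFree 4 4 S ∧ S.card = c} =
      {c : ℕ | ∃ A : (Fin n → ZMod 2) → Finset (Fin n → ZMod 2),
        PropertyStarStar A ∧ ∑ x : Fin n → ZMod 2, (A x).card = c} := by
    ext c
    simp only [Set.mem_setOf_eq]
    constructor
    · rintro ⟨S, hS, rfl⟩
      exact ⟨_, dir1 hS, cardFib S⟩
    · rintro ⟨A, hA, rfl⟩
      exact ⟨SA A, dir2 hA, cardSA A⟩
  rw [rAP, hset]
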